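/- Let T be a (possibly unbounded) self-adjoint operator on a complex Hilbert space which is boundedly invertible, and suppose d₊ := dist(0, σ(T) ∩ (0,∞)) > 0 and d₋ := dist(0, σ(T) ∩ (−∞,0)) > 0. Let V be a bounded self-adjoint operator with ‖V‖ ≤ 1 and let β ∈ ℝ satisfy |β| < √(d₊ d₋). Then T + iβV (with domain dom(T)) is continuously invertible, i.e., it is a bijection from dom(T) onto the whole Hilbert space with bounded inverse. -/

import Mathlib

/-!
Common setup: the Hilbert space `ℓ²(ℕ, K)`, block Jacobi operators on their maximal
domain, resolvents, spectrum and essential spectrum of (possibly unbounded) operators,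
and the scalar auxiliary functions of the paper.
-/

noncomputable section

open scoped ENNReal

namespace BlockJacobi

variable {K : Type*} [NormedAddCommGroup K] [InnerProductSpace ℂ K] [CompleteSpace K]

/-- The Hilbert space `ℓ²(ℕ, K)`. -/
abbrev H (K : Type*) [NormedAddCommGroup K] [InnerProductSpace ℂ K] : Type _ :=
  lp (fun _ : ℕ => K) 2

/-- The formal action of the block Jacobi matrix (0-indexed):
`(J u)₀ = B₀ u₀ + A₀ u₁` and `(J u)ₙ₊₁ = Aₙ* uₙ + Bₙ₊₁ uₙ₊₁ + Aₙ₊₁ uₙ₊₂`. -/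
def jacobiAct (A B : ℕ → K →L[ℂ] K) (u : ℕ → K) : ℕ → K
  | 0 => B 0 (u 0) + A 0 (u 1)
  | (n + 1) =>
      (ContinuousLinearMap.adjoint (A n)) (u n) + B (n + 1) (u (n + 1)) + A (n + 1) (u (n + 2))

/-- `J` is the block Jacobi operator with entries `A`, `B`, defined on the maximal domain. -/
structure IsJacobiOp (A B : ℕ → K →L[ℂ] K) (J : H K →ₗ.[ℂ] H K) : Prop where
  mem_domain_iff : ∀ u : H K, u ∈ J.domain ↔ Memℓp (jacobiAct A B u) 2
  apply_eq : ∀ u : J.domain, ∀ n, (J u : ∀ _ : ℕ, K) n = jacobiAct A B (u : H K) n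

/-- `R` is the (bounded, everywhere defined, two-sided) inverse of `T - ζ`; in other words,
`ζ` belongs to the resolvent set of `T` and `R` is the resolvent of `T` at `ζ`. -/
def IsResolventAt {E : Type*} [NormedAddCommGroup E] [InnerProductSpace ℂ E]
    (T : E →ₗ.[ℂ] E) (ζ : ℂ) (R : E →L[ℂ] E) : Prop :=
  (∀ u : E, ∃ h : R u ∈ T.domain, T ⟨R u, h⟩ - ζ • R u = u) ∧
    (∀ v : T.domain, R (T v - ζ • (v : E)) = (v : E))

/-- The spectrum of a (possibly unbounded) operator `T`: the set of `ζ : ℂ` at which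
no bounded resolvent exists. -/
def pSpectrum {E : Type*} [NormedAddCommGroup E] [InnerProductSpace ℂ E]
    (T : E →ₗ.[ℂ] E) : Set ℂ :=
  {ζ | ¬ ∃ R : E →L[ℂ] E, IsResolventAt T ζ R}

/-- The eigenspace of `T` at `ζ`. -/
def eigenspace {E : Type*} [NormedAddCommGroup E] [InnerProductSpace ℂ E]
    (T : E →ₗ.[ℂ] E) (ζ : ℂ) : Submodule ℂ E where
  carrier := {x | ∃ hx : x ∈ T.domain, T ⟨x, hx⟩ = ζ • x}
  zero_mem' := ⟨T.domain.zero_mem, by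
    have : (⟨(0 : E), T.domain.zero_mem⟩ : T.domain) = 0 := rfl
    rw [this, LinearPMap.map_zero, smul_zero]⟩
  add_mem' := by
    rintro x y ⟨hx, hTx⟩ ⟨hy, hTy⟩
    refine ⟨T.domain.add_mem hx hy, ?_⟩
    have : (⟨x + y, T.domain.add_mem hx hy⟩ : T.domain) = ⟨x, hx⟩ + ⟨y, hy⟩ := rfl
    rw [this, LinearPMap.map_add, hTx, hTy, smul_add]
  smul_mem' := by
    rintro c x ⟨hx, hTx⟩
    refine ⟨T.domain.smul_mem c hx, ?_⟩
    have : (⟨c • x, T.domain.smul_mem c hx⟩ : T.domain) = c • ⟨x, hx⟩ := rfl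
    rw [this, LinearPMap.map_smul, hTx, smul_comm]

/-- `ζ` is an eigenvalue of `T`. -/
def IsEigenvalue {E : Type*} [NormedAddCommGroup E] [InnerProductSpace ℂ E]
    (T : E →ₗ.[ℂ] E) (ζ : ℂ) : Prop :=
  eigenspace T ζ ≠ ⊥

/-- The essential spectrum of `T`: the spectrum with the isolated eigenvalues of finite
multiplicity removed. -/
def essSpectrum {E : Type*} [NormedAddCommGroup E] [InnerProductSpace ℂ E]
    (T : E →ₗ.[ℂ] E) : Set ℂ :=
  {ζ ∈ pSpectrum T |
    ¬ ((∃ ε > (0 : ℝ), Metric.ball ζ ε ∩ pSpectrum T ⊆ {ζ}) ∧ IsEigenvalue T ζ ∧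
        FiniteDimensional ℂ (eigenspace T ζ))}

/-- The sum of an unbounded operator `T` and a bounded, everywhere defined operator `W`,
defined on the domain of `T`. -/
def addBounded {E : Type*} [NormedAddCommGroup E] [InnerProductSpace ℂ E]
    (T : E →ₗ.[ℂ] E) (W : E →L[ℂ] E) : E →ₗ.[ℂ] E where
  domain := T.domain
  toFun := T.toFun + (W.toLinearMap.comp T.domain.subtype)

/-- The canonical isometric embedding of `K` onto the `k`-th coordinate of `ℓ²(ℕ, K)`. -/
def singleCLM (k : ℕ) : K →L[ℂ] H K :=
  LinearMap.mkContinuous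
    { toFun := fun v => lp.single 2 k v
      map_add' := fun v w => by
        apply lp.ext
        funext j
        by_cases h : j = k
        · subst h; simp [lp.single_apply_self]
        · simp [lp.single_apply_ne _ _ _ h]
      map_smul' := fun c v => by simp }
    1 (fun v => by
      rw [one_mul]
      exact le_of_eq (lp.norm_single (E := fun _ : ℕ => K) (p := 2) (by norm_num) k v))

/-- The evaluation of an element of `ℓ²(ℕ, K)` at the `j`-th coordinate. -/
def projCLM (j : ℕ) : H K →L[ℂ] K :=
  LinearMap.mkContinuous
    { toFun := fun u => u j
      map_add' := fun u v => by simp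
      map_smul' := fun c u => by simp }
    1 (fun u => by
      rw [one_mul]
      exact lp.norm_apply_le_norm two_ne_zero u j)

/-- The `(j,k)` entry of the block Green matrix, regarded as a bounded operator on `K`,
expressed through the resolvent `R` of `J` at `ζ`. -/
def green (R : H K →L[ℂ] H K) (j k : ℕ) : K →L[ℂ] K :=
  (projCLM j) ∘L R ∘L (singleCLM k)

/-- The family `{Aₘ, Bₘ, Aₘ* : m ∈ ℕ}` of the entries of a block Jacobi matrix. -/
def jacobiFamily (A B : ℕ → K →L[ℂ] K) : Set (K →L[ℂ] K) :=
  {T | ∃ m, T = A m ∨ T = B m ∨ T = ContinuousLinearMap.adjoint (A m)}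

/-- `|T| = (T* T)^{1/2}`, via the continuous functional calculus. -/
def opAbs (T : K →L[ℂ] K) : K →L[ℂ] K :=
  cfc Real.sqrt (ContinuousLinearMap.adjoint T * T)

/-- The essential spectrum of a bounded operator: the spectrum with the isolated
eigenvalues of finite multiplicity removed. -/
def essSpectrumBdd {E : Type*} [NormedAddCommGroup E] [NormedSpace ℂ E] [CompleteSpace E]
    (T : E →L[ℂ] E) : Set ℂ :=
  {ζ ∈ spectrum ℂ T |
    ¬ ((∃ ε > (0 : ℝ), Metric.ball ζ ε ∩ spectrum ℂ T ⊆ {ζ}) ∧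
        Module.End.eigenspace (↑T : E →ₗ[ℂ] E) ζ ≠ ⊥ ∧
        FiniteDimensional ℂ (Module.End.eigenspace (↑T : E →ₗ[ℂ] E) ζ))}

/-! Scalar auxiliary functions. -/

/-- `ψ(x) = x² eˣ`. -/
def psi (x : ℝ) : ℝ := x ^ 2 * Real.exp x

/-- `ψ̃(x) = x eˣ`. -/
def psit (x : ℝ) : ℝ := x * Real.exp x

/-- The inverse of `ψ`, a strictly increasing bijection of `(0, ∞)` onto itself. -/
def psiInv (y : ℝ) : ℝ := sSup {x : ℝ | 0 ≤ x ∧ psi x ≤ y}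

/-- The inverse of `ψ̃`, a strictly increasing bijection of `(0, ∞)` onto itself. -/
def psitInv (y : ℝ) : ℝ := sSup {x : ℝ | 0 ≤ x ∧ psit x ≤ y}

/-- `φ_δ`, the regularized reciprocal. -/
def phiDelta (δ x : ℝ) : ℝ := if x < δ then 1 / δ else 1 / x

/-- `w(x) = √((x − r)(s − x))`. -/
def w (r s x : ℝ) : ℝ := Real.sqrt ((x - r) * (s - x))

/-- The decay exponent `γ(ζ)` of Theorem 3.2. -/
def gam (r s δ ε η : ℝ) (ζ : ℂ) : ℝ :=
  if |ζ.im| ≤ w r s ζ.re * ε / 2 then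
    min (δ * psiInv (w r s ζ.re ^ 2 * ε / (2 * δ * (s - r))))
      (δ * psitInv (w r s ζ.re * (1 - 2 * ε) / (2 * δ)))
  else δ * psitInv (w r s ζ.re * ε * (1 - η) / (4 * δ))

private lemma exists_ab (β : ℝ) (e₁ e₂ : ℝ≥0∞) (h₁ : 0 < e₁) (h₂ : 0 < e₂)
    (hβ : ENNReal.ofReal (β ^ 2) < e₁ * e₂) :
    ∃ a b : ℝ, 0 < a ∧ 0 < b ∧ ENNReal.ofReal a ≤ e₁ ∧ ENNReal.ofReal b ≤ e₂ ∧
      β ^ 2 < a * b := by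
  rcases eq_or_ne e₁ ⊤ with h1 | h1
  · rcases eq_or_ne e₂ ⊤ with h2 | h2
    · exact ⟨|β| + 1, |β| + 1, by positivity, by positivity, h1 ▸ le_top, h2 ▸ le_top,
        by nlinarith [abs_nonneg β, sq_abs β]⟩
    · have hb : 0 < e₂.toReal := ENNReal.toReal_pos h₂.ne' h2
      refine ⟨β ^ 2 / e₂.toReal + 1, e₂.toReal, by positivity, hb, h1 ▸ le_top,
        ENNReal.ofReal_toReal_le, ?_⟩
      have : (β ^ 2 / e₂.toReal + 1) * e₂.toReal = β ^ 2 + e₂.toReal := by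
        field_simp
      nlinarith
  · have ha : 0 < e₁.toReal := ENNReal.toReal_pos h₁.ne' h1
    rcases eq_or_ne e₂ ⊤ with h2 | h2
    · refine ⟨e₁.toReal, β ^ 2 / e₁.toReal + 1, ha, by positivity,
        ENNReal.ofReal_toReal_le, h2 ▸ le_top, ?_⟩
      have : e₁.toReal * (β ^ 2 / e₁.toReal + 1) = β ^ 2 + e₁.toReal := by
        field_simp
      nlinarith
    · have hb : 0 < e₂.toReal := ENNReal.toReal_pos h₂.ne' h2
      refine ⟨e₁.toReal, e₂.toReal, ha, hb, ENNReal.ofReal_toReal_le,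
        ENNReal.ofReal_toReal_le, ?_⟩
      rw [← ENNReal.ofReal_toReal h1, ← ENNReal.ofReal_toReal h2,
        ← ENNReal.ofReal_mul ha.le] at hβ
      exact (ENNReal.ofReal_lt_ofReal_iff (by positivity)).mp hβ

private lemma ofReal_smul_eq {M : Type*} [AddCommGroup M] [Module ℝ M] [Module ℂ M]
    [IsScalarTower ℝ ℂ M] (r : ℝ) (x : M) : (r : ℂ) • x = r • x := by
  rw [← Complex.coe_algebraMap, algebraMap_smul]


set_option maxHeartbeats 1600000 in
/-- **Lemma 3.1** (Janas–Naboko–Stolz type): if `T` is a boundedly invertible self-adjoint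
operator whose spectrum stays at `ℝ`-distance `d₊ > 0` (resp. `d₋ > 0`) from `0` on the
positive (resp. negative) side, `V` is a self-adjoint contraction, and `|β| < √(d₊ d₋)`
(equivalently `β² < d₊ d₋`, with the distance to the empty set read as `+∞`), then
`T + iβV` is continuously invertible. -/
theorem lemma_JNS {E : Type*} [NormedAddCommGroup E] [InnerProductSpace ℂ E] [CompleteSpace E]
    (T : E →ₗ.[ℂ] E) (hT : IsSelfAdjoint T)
    (hTinv : ∃ R₀ : E →L[ℂ] E, IsResolventAt T 0 R₀)
    (hdPlus : 0 < EMetric.infEdist (0 : ℂ) (pSpectrum T ∩ {z : ℂ | 0 < z.re ∧ z.im = 0}))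
    (hdMinus : 0 < EMetric.infEdist (0 : ℂ) (pSpectrum T ∩ {z : ℂ | z.re < 0 ∧ z.im = 0}))
    (V : E →L[ℂ] E) (hV : IsSelfAdjoint V) (hV1 : ‖V‖ ≤ 1)
    (β : ℝ)
    (hβ : ENNReal.ofReal (β ^ 2) <
      EMetric.infEdist (0 : ℂ) (pSpectrum T ∩ {z : ℂ | 0 < z.re ∧ z.im = 0}) *
        EMetric.infEdist (0 : ℂ) (pSpectrum T ∩ {z : ℂ | z.re < 0 ∧ z.im = 0})) :
    ∃ R : E →L[ℂ] E, IsResolventAt (addBounded T ((Complex.I * (β : ℂ)) • V)) 0 R := by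
  classical
  obtain ⟨R₀, h1, h2⟩ := hTinv
  choose hmem hTR using h1
  simp only [zero_smul, sub_zero] at hTR
  have hRT : ∀ v : T.domain, R₀ (T v) = (v : E) := fun v => by
    simpa using h2 v
  -- symmetry of T
  have hdense := hT.dense_domain
  have hform := LinearPMap.adjoint_isFormalAdjoint hdense
  rw [LinearPMap.isSelfAdjoint_def.mp hT] at hform
  -- R₀ is self-adjoint
  have hR₀sa : IsSelfAdjoint R₀ := by
    rw [ContinuousLinearMap.isSelfAdjoint_iff_isSymmetric]
    intro u v
    have h := hform ⟨R₀ u, hmem u⟩ ⟨R₀ v, hmem v⟩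
    rw [hTR u, hTR v] at h
    exact h.symm
  -- choose the gap parameters
  obtain ⟨a, b, ha, hb, haP, hbP, hab⟩ := exists_ab β _ _ hdPlus hdMinus hβ
  -- key: reals t with t⁻¹ in the resolvent set of T are not in the spectrum of R₀
  have key : ∀ t : ℝ, t ≠ 0 → ((t⁻¹ : ℝ) : ℂ) ∉ pSpectrum T →
      IsUnit (algebraMap ℝ (E →L[ℂ] E) t - R₀) := by
    intro t ht hnot
    rw [pSpectrum, Set.mem_setOf_eq, not_not] at hnot
    obtain ⟨Rμ, hμ1, hμ2⟩ := hnot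
    set τ : ℂ := (t : ℂ) with hτ
    have hτ0 : τ ≠ 0 := by simpa [hτ] using ht
    have hζ : ((t⁻¹ : ℝ) : ℂ) = τ⁻¹ := by push_cast [hτ]; ring
    have kA : ∀ x : E, Rμ (R₀ x) = τ • Rμ x - τ • R₀ x := by
      intro x
      have h := hμ2 ⟨R₀ x, hmem x⟩
      rw [hTR x, map_sub, map_smul, hζ] at h
      replace h : Rμ x - τ⁻¹ • Rμ (R₀ x) = R₀ x := h
      have h3 : τ • Rμ x - Rμ (R₀ x) = τ • R₀ x := by
        have h2' := congrArg (fun z => τ • z) h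
        simpa [smul_sub, smul_smul, mul_inv_cancel₀ hτ0] using h2'
      rw [← h3]; abel
    have kB : ∀ x : E, R₀ (Rμ x) = τ • Rμ x - τ • R₀ x := by
      intro x
      obtain ⟨hd, hTeq⟩ := hμ1 x
      have hTv : T ⟨Rμ x, hd⟩ = x + ((t⁻¹ : ℝ) : ℂ) • Rμ x := sub_eq_iff_eq_add.mp hTeq
      have h := hRT ⟨Rμ x, hd⟩
      rw [hTv, map_add, map_smul, hζ] at h
      replace h : R₀ x + τ⁻¹ • R₀ (Rμ x) = Rμ x := h
      have h3 : τ • R₀ x + R₀ (Rμ x) = τ • Rμ x := by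
        have h2' := congrArg (fun z => τ • z) h
        simpa [smul_add, smul_smul, mul_inv_cancel₀ hτ0] using h2'
      rw [← h3]; abel
    have halg : algebraMap ℝ (E →L[ℂ] E) t = τ • 1 := by
      rw [Algebra.algebraMap_eq_smul_one, ofReal_smul_eq]
    refine ⟨⟨algebraMap ℝ (E →L[ℂ] E) t - R₀,
      τ⁻¹ • 1 + (τ⁻¹ * τ⁻¹) • Rμ, ?_, ?_⟩, rfl⟩
    · apply ContinuousLinearMap.ext; intro x
      simp only [halg, ContinuousLinearMap.mul_apply, ContinuousLinearMap.add_apply,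
        ContinuousLinearMap.smul_apply, ContinuousLinearMap.one_apply,
        ContinuousLinearMap.sub_apply, map_add, map_smul, kB, smul_sub]
      match_scalars <;> field_simp <;> ring
    · apply ContinuousLinearMap.ext; intro x
      simp only [halg, ContinuousLinearMap.mul_apply, ContinuousLinearMap.add_apply,
        ContinuousLinearMap.smul_apply, ContinuousLinearMap.one_apply,
        ContinuousLinearMap.sub_apply, map_add, map_sub, map_smul, kA, smul_sub]
      match_scalars <;> field_simp <;> ring
  -- the spectrum of R₀ is contained in [-1/b, 1/a]
  have hspec : spectrum ℝ R₀ ⊆ Set.Icc (-(1/b)) (1/a) := by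
    intro t ht
    by_contra hout
    rw [Set.mem_Icc, not_and_or, not_le, not_le] at hout
    have hres : t ≠ 0 ∧ ((t⁻¹ : ℝ) : ℂ) ∉ pSpectrum T := by
      rcases hout with h | h
      · have ht0 : t < 0 := by nlinarith [one_div_pos.mpr hb]
        have hbb : b * (1/b) = 1 := by field_simp
        have hμneg : t⁻¹ < 0 := inv_neg''.mpr ht0
        have hμgt : -b < t⁻¹ := by
          nlinarith [mul_inv_cancel₀ ht0.ne, mul_lt_mul_of_pos_left h hb]
        refine ⟨ht0.ne, fun hmemS => ?_⟩
        have hz : ((t⁻¹ : ℝ) : ℂ) ∈ pSpectrum T ∩ {z : ℂ | z.re < 0 ∧ z.im = 0} :=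
          ⟨hmemS, by simp [hμneg]⟩
        have hle := EMetric.infEdist_le_edist_of_mem (x := (0 : ℂ)) hz
        rw [edist_dist, dist_zero_left, Complex.norm_real, Real.norm_eq_abs,
          abs_of_neg hμneg] at hle
        have hlt : ENNReal.ofReal (-t⁻¹) < ENNReal.ofReal b :=
          (ENNReal.ofReal_lt_ofReal_iff hb).mpr (by linarith)
        exact absurd ((hle.trans_lt hlt).trans_le hbP) (lt_irrefl _)
      · have ht0 : (0:ℝ) < t := lt_trans (one_div_pos.mpr ha) h
        have haa : a * (1/a) = 1 := by field_simp
        have hμpos : 0 < t⁻¹ := inv_pos.mpr ht0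
        have hμlt : t⁻¹ < a := by
          nlinarith [mul_inv_cancel₀ ht0.ne', mul_lt_mul_of_pos_left h ha]
        refine ⟨ht0.ne', fun hmemS => ?_⟩
        have hz : ((t⁻¹ : ℝ) : ℂ) ∈ pSpectrum T ∩ {z : ℂ | 0 < z.re ∧ z.im = 0} :=
          ⟨hmemS, by simp [hμpos]⟩
        have hle := EMetric.infEdist_le_edist_of_mem (x := (0 : ℂ)) hz
        rw [edist_dist, dist_zero_left, Complex.norm_real, Real.norm_eq_abs,
          abs_of_pos hμpos] at hle
        have hlt : ENNReal.ofReal t⁻¹ < ENNReal.ofReal a :=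
          (ENNReal.ofReal_lt_ofReal_iff ha).mpr hμlt
        exact absurd ((hle.trans_lt hlt).trans_le haP) (lt_irrefl _)
    exact (spectrum.mem_iff.mp ht) (key t hres.1 hres.2)
  -- the shift parameters
  set m : ℝ := (a + b) / 2 with hm
  set c : ℝ := (a - b) / 2 with hc
  have hm0 : 0 < m := by rw [hm]; linarith
  have hgpos : ∀ t ∈ spectrum ℝ R₀, 0 < 1 - c * t := by
    intro t ht
    obtain ⟨hL, hU⟩ := Set.mem_Icc.mp (hspec ht)
    rcases le_total 0 c with hc0 | hc0
    · have h1 : c * t ≤ c * (1/a) := mul_le_mul_of_nonneg_left hU hc0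
      have haa : a * (1/a) = 1 := by field_simp
      have h2 : c * (1/a) < 1 := by
        rw [hc]; linarith [haa, mul_pos hb (one_div_pos.mpr ha)]
      linarith
    · have h1 : c * t ≤ c * (-(1/b)) := mul_le_mul_of_nonpos_left hL hc0
      have hbb : b * (1/b) = 1 := by field_simp
      have h2 : c * (-(1/b)) < 1 := by
        rw [hc]; linarith [hbb, mul_pos ha (one_div_pos.mpr hb)]
      linarith
  set f : ℝ → ℝ := fun t => t / (1 - c * t) with hf
  have hgc : ContinuousOn (fun t : ℝ => 1 - c * t) (spectrum ℝ R₀) :=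
    continuousOn_const.sub (continuousOn_const.mul continuousOn_id)
  have hfc : ContinuousOn f (spectrum ℝ R₀) :=
    continuousOn_id.div hgc (fun t ht => (hgpos t ht).ne')
  have hinvc : ContinuousOn (fun t : ℝ => (1 - c * t)⁻¹) (spectrum ℝ R₀) :=
    hgc.inv₀ (fun t ht => (hgpos t ht).ne')
  have hcg : cfc (fun t : ℝ => 1 - c * t) R₀ = 1 - c • R₀ := by
    have e1 : cfc (fun t : ℝ => (fun _ : ℝ => (1:ℝ)) t - (fun s : ℝ => c * s) t) R₀
        = cfc (fun _ : ℝ => (1:ℝ)) R₀ - cfc (fun s : ℝ => c * s) R₀ :=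
      cfc_sub _ _ R₀ continuousOn_const (continuousOn_const.mul continuousOn_id)
    calc cfc (fun t : ℝ => 1 - c * t) R₀
        = cfc (fun _ : ℝ => (1:ℝ)) R₀ - cfc (fun s : ℝ => c * s) R₀ := e1
      _ = 1 - c • R₀ := by rw [cfc_const_one ℝ R₀, cfc_const_mul_id c R₀]
  set G := cfc f R₀ with hG
  have hGX : G * (1 - c • R₀) = R₀ := by
    rw [hG, ← hcg, ← cfc_mul f _ R₀ hfc hgc]
    calc cfc (fun t => f t * (1 - c * t)) R₀
        = cfc (id : ℝ → ℝ) R₀ := cfc_congr (fun t ht => by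
            simp only [hf, id_eq]; exact div_mul_cancel₀ t (hgpos t ht).ne')
      _ = R₀ := cfc_id ℝ R₀
  have hXunit : IsUnit ((1 : E →L[ℂ] E) - c • R₀) := by
    refine ⟨⟨1 - c • R₀, cfc (fun t : ℝ => (1 - c * t)⁻¹) R₀, ?_, ?_⟩, rfl⟩
    · rw [← hcg, ← cfc_mul _ _ R₀ hgc hinvc]
      calc cfc (fun t : ℝ => (1 - c * t) * (1 - c * t)⁻¹) R₀
          = cfc (fun _ : ℝ => (1:ℝ)) R₀ :=
            cfc_congr (fun t ht => mul_inv_cancel₀ (hgpos t ht).ne')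
        _ = 1 := cfc_const_one ℝ R₀
    · rw [← hcg, ← cfc_mul _ _ R₀ hinvc hgc]
      calc cfc (fun t : ℝ => (1 - c * t)⁻¹ * (1 - c * t)) R₀
          = cfc (fun _ : ℝ => (1:ℝ)) R₀ :=
            cfc_congr (fun t ht => inv_mul_cancel₀ (hgpos t ht).ne')
        _ = 1 := cfc_const_one ℝ R₀
  have hGnorm : ‖G‖ ≤ 1/m := by
    apply norm_cfc_le (by positivity)
    intro t ht
    obtain ⟨hL, hU⟩ := Set.mem_Icc.mp (hspec ht)
    rw [hf, Real.norm_eq_abs, abs_div, abs_of_pos (hgpos t ht),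
      div_le_div_iff₀ (hgpos t ht) hm0]
    rcases le_total 0 t with h0 | h0
    · rw [abs_of_nonneg h0]
      have haa : a * (1/a) = 1 := by field_simp
      have h1 : a * t ≤ a * (1/a) := mul_le_mul_of_nonneg_left hU ha.le
      rw [hm, hc]; linarith [h1, haa]
    · rw [abs_of_nonpos h0]
      have hbb : b * (1/b) = 1 := by field_simp
      have h1' : -t ≤ 1/b := by linarith
      have h1 : b * (-t) ≤ b * (1/b) := mul_le_mul_of_nonneg_left h1' hb.le
      rw [hm, hc]; linarith [h1, hbb]
  -- the bounded perturbation
  set W : E →L[ℂ] E := (c : ℂ) • (1 : E →L[ℂ] E) + (Complex.I * (β:ℂ)) • V with hW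
  have hVsym := ContinuousLinearMap.isSelfAdjoint_iff_isSymmetric.mp hV
  have hWnorm : ‖W‖ ≤ Real.sqrt (c^2 + β^2) := by
    apply ContinuousLinearMap.opNorm_le_bound _ (Real.sqrt_nonneg _)
    intro u
    have hVu : ‖V u‖ ≤ ‖u‖ := by
      calc ‖V u‖ ≤ ‖V‖ * ‖u‖ := V.le_opNorm u
        _ ≤ 1 * ‖u‖ := mul_le_mul_of_nonneg_right hV1 (norm_nonneg u)
        _ = ‖u‖ := one_mul _
    have him : (inner ℂ u (V u) : ℂ).im = 0 := by
      have h2' : (starRingEnd ℂ) (inner ℂ u (V u) : ℂ) = inner ℂ u (V u) := by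
        rw [inner_conj_symm]
        exact hVsym u u
      exact Complex.conj_eq_iff_im.mp h2'
    have hre : ((starRingEnd ℂ) (c:ℂ) * (Complex.I * (β:ℂ) * inner ℂ u (V u))).re = 0 := by
      simp [Complex.conj_ofReal, Complex.mul_re, Complex.mul_im, Complex.I_re, Complex.I_im,
        Complex.ofReal_re, Complex.ofReal_im, him]
    have hexp : ‖W u‖^2 = c^2 * ‖u‖^2 + β^2 * ‖V u‖^2 := by
      rw [hW]
      simp only [ContinuousLinearMap.add_apply, ContinuousLinearMap.smul_apply,
        ContinuousLinearMap.one_apply]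
      rw [norm_add_sq (𝕜 := ℂ), inner_smul_left, inner_smul_right]
      rw [RCLike.re_to_complex, hre]
      rw [norm_smul, norm_smul, Complex.norm_real, norm_mul, Complex.norm_I, one_mul,
        Complex.norm_real, Real.norm_eq_abs, Real.norm_eq_abs, mul_pow, mul_pow,
        sq_abs, sq_abs]
      ring
    have h5 : ‖W u‖ = Real.sqrt (‖W u‖^2) := (Real.sqrt_sq (norm_nonneg _)).symm
    rw [h5, hexp]
    have hq1 : ‖V u‖ * ‖V u‖ ≤ ‖u‖ * ‖u‖ :=
      mul_le_mul hVu hVu (norm_nonneg (V u)) (norm_nonneg u)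
    have hq2 : β^2 * (‖V u‖ * ‖V u‖) ≤ β^2 * (‖u‖ * ‖u‖) :=
      mul_le_mul_of_nonneg_left hq1 (sq_nonneg β)
    calc Real.sqrt (c^2 * ‖u‖^2 + β^2 * ‖V u‖^2)
        ≤ Real.sqrt ((c^2 + β^2) * ‖u‖^2) := Real.sqrt_le_sqrt (by linarith [hq2])
      _ = Real.sqrt (c^2 + β^2) * ‖u‖ := by
          rw [Real.sqrt_mul (by positivity), Real.sqrt_sq (norm_nonneg u)]
  have hs_lt : Real.sqrt (c^2 + β^2) < m := by
    rw [show m = Real.sqrt (m^2) from (Real.sqrt_sq hm0.le).symm]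
    apply Real.sqrt_lt_sqrt (by positivity)
    rw [hm, hc]; nlinarith [hab]
  have hWG : ‖-(W * G)‖ < 1 := by
    rw [norm_neg]
    have h1 : ‖W * G‖ ≤ ‖W‖ * ‖G‖ := norm_mul_le _ _
    have h2 : ‖W‖ * ‖G‖ ≤ Real.sqrt (c^2 + β^2) * (1/m) :=
      mul_le_mul hWnorm hGnorm (norm_nonneg G) (Real.sqrt_nonneg _)
    have h3 : Real.sqrt (c^2 + β^2) * (1/m) < m * (1/m) :=
      mul_lt_mul_of_pos_right hs_lt (by positivity)
    have h4 : m * (1/m) = 1 := by field_simp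
    linarith
  have hUunit : IsUnit ((1 : E →L[ℂ] E) + W * G) := by
    refine ⟨Units.oneSub (-(W * G)) hWG, ?_⟩
    show (1 : E →L[ℂ] E) - -(W * G) = 1 + W * G
    rw [sub_neg_eq_add]
  set C : E →L[ℂ] E := 1 + (Complex.I * (β:ℂ)) • (V * R₀) with hC
  have hfact : C = (1 + W * G) * (1 - c • R₀) := by
    rw [add_mul, one_mul, mul_assoc, hGX, hW, add_mul, smul_mul_assoc, smul_mul_assoc,
      one_mul, ofReal_smul_eq, hC]
    abel
  have hCunit : IsUnit C := by rw [hfact]; exact hUunit.mul hXunit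
  obtain ⟨Cu, hCu⟩ := hCunit
  set D : E →L[ℂ] E := ((Cu⁻¹ : (E →L[ℂ] E)ˣ) : E →L[ℂ] E) with hD
  have hCD : C * D = 1 := by rw [← hCu, hD]; exact Cu.mul_inv
  have hDC : D * C = 1 := by rw [← hCu, hD]; exact Cu.inv_mul
  refine ⟨R₀ * D, fun u => ?_, fun v => ?_⟩
  · refine ⟨hmem (D u), ?_⟩
    rw [zero_smul, sub_zero]
    show T ⟨R₀ (D u), hmem (D u)⟩ + ((Complex.I * (β:ℂ)) • V) (R₀ (D u)) = u
    rw [hTR (D u)]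
    have hCDu : C (D u) = u := by
      rw [← ContinuousLinearMap.mul_apply, hCD, ContinuousLinearMap.one_apply]
    rw [hC] at hCDu
    simp only [ContinuousLinearMap.add_apply, ContinuousLinearMap.one_apply,
      ContinuousLinearMap.smul_apply, ContinuousLinearMap.mul_apply] at hCDu
    rw [ContinuousLinearMap.smul_apply]
    exact hCDu
  · rw [zero_smul, sub_zero]
    have hv : (v : E) ∈ T.domain := v.2
    have happ : (addBounded T ((Complex.I * (β:ℂ)) • V)) v
        = T ⟨(v : E), hv⟩ + (Complex.I * (β:ℂ)) • V (v : E) := rfl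
    rw [happ]
    have hSv : T ⟨(v : E), hv⟩ + (Complex.I * (β:ℂ)) • V (v : E) = C (T ⟨(v : E), hv⟩) := by
      rw [hC]
      simp only [ContinuousLinearMap.add_apply, ContinuousLinearMap.one_apply,
        ContinuousLinearMap.smul_apply, ContinuousLinearMap.mul_apply, hRT ⟨(v : E), hv⟩]
    rw [hSv]
    show R₀ (D (C (T ⟨(v : E), hv⟩))) = (v : E)
    have hDCx : D (C (T ⟨(v : E), hv⟩)) = T ⟨(v : E), hv⟩ := by
      rw [← ContinuousLinearMap.mul_apply, hDC, ContinuousLinearMap.one_apply]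
    rw [hDCx]
    exact hRT ⟨(v : E), hv⟩


end BlockJacobi
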